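/- Let w be an infinite binary word with only finitely many weakly abelian unbordered factors. Then the frequency of each letter exists in w and is a rational number. -/

import Mathlib

open Filter

def factor {α : Type*} (w : ℕ → α) (i n : ℕ) : List α :=
  (List.range n).map (fun k => w (i + k))

def IsFactor {α : Type*} (u : List α) (w : ℕ → α) : Prop :=
  ∃ i, factor w i u.length = u

def SameFreq {α : Type*} [DecidableEq α] (u v : List α) : Prop :=
  ∀ a : α, (u.count a : ℚ) / u.length = (v.count a : ℚ) / v.length

def WeaklyAbelianBordered {α : Type*} [DecidableEq α] (w : List α) : Prop :=
  ∃ p s : List α, p <+: w ∧ s <:+ w ∧ p ≠ [] ∧ p.length < w.length ∧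
    s ≠ [] ∧ s.length < w.length ∧ SameFreq p s

namespace WAUaux


def Supp (g : ℕ → ℤ) (i n : ℕ) : Prop :=
  ∀ m, i ≤ m → m ≤ i + n → (g (i+n) - g i) * ((m:ℤ) - (i:ℤ)) ≤ (g m - g i) * (n:ℤ)

lemma exists_slope_min (g : ℕ → ℤ) (i n : ℕ) (hn : 0 < n) :
    ∃ t, i < t ∧ t ≤ i + n ∧ ∀ m, i < m → m ≤ i + n →
      (g t - g i) * ((m:ℤ) - (i:ℤ)) ≤ (g m - g i) * ((t:ℤ) - (i:ℤ)) := by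
  obtain ⟨t, ht, hmin⟩ := (Finset.Ioc i (i+n)).exists_min_image
    (fun m => ((g m - g i : ℤ) : ℚ) / ((m : ℚ) - (i : ℚ)))
    ⟨i + n, by simp [Finset.mem_Ioc]; omega⟩
  simp only [Finset.mem_Ioc] at ht
  refine ⟨t, ht.1, ht.2, fun m hm1 hm2 => ?_⟩
  have h := hmin m (by simp [Finset.mem_Ioc]; omega)
  have htpos : (0:ℚ) < (t:ℚ) - i := by
    have : (i:ℚ) < t := by exact_mod_cast ht.1
    linarith
  have hmpos : (0:ℚ) < (m:ℚ) - i := by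
    have : (i:ℚ) < m := by exact_mod_cast hm1
    linarith
  rw [div_le_div_iff₀ htpos hmpos] at h
  exact_mod_cast h

section
variable (g : ℕ → ℤ) (N : ℕ)
variable (hN1 : 0 < N)
variable (hmono : ∀ i j : ℕ, i ≤ j → g i ≤ g j)
variable (hlip : ∀ i j : ℕ, i ≤ j → g j - g i ≤ (j:ℤ) - (i:ℤ))
variable (hN : ∀ i n : ℕ, N ≤ n → ∃ k, i < k ∧ k < i + n ∧
  (g k - g i) * (n:ℤ) ≤ (g (i+n) - g i) * ((k:ℤ) - (i:ℤ)))

include hN1 hmono hlip hN in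
/-- Lemma F : on a supported interval the path stays within `N` above the chord. -/
lemma lemF : ∀ n i k, i ≤ k → k ≤ i + n → Supp g i n →
    (g k - g i) * (n:ℤ) ≤ (g (i+n) - g i) * ((k:ℤ) - (i:ℤ)) + N * n := by
  intro n
  induction n using Nat.strong_induction_on with
  | _ n IH =>
    intro i k hik hki hab
    rcases lt_or_ge n N with hnN | hnN
    · -- short interval : trivial bound
      have h1 : g k - g i ≤ (k:ℤ) - i := hlip i k hik
      have h2 : (k:ℤ) - i ≤ n := by
        have : (k:ℤ) ≤ i + n := by exact_mod_cast hki
        push_cast at this ⊢; linarith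
      have h3 : (0:ℤ) ≤ (k:ℤ) - i := by
        have : (i:ℤ) ≤ k := by exact_mod_cast hik
        linarith
      have h4 : (0:ℤ) ≤ g (i+n) - g i := sub_nonneg.2 (hmono i (i+n) (Nat.le_add_right _ _))
      have h5 : g k - g i ≤ N := by
        have : (n:ℤ) ≤ N := by exact_mod_cast hnN.le
        linarith
      have h6 : (g k - g i) * n ≤ (N:ℤ) * n :=
        mul_le_mul_of_nonneg_right h5 (by positivity)
      nlinarith [mul_nonneg h4 h3]
    · -- long interval : get an interior on-chord point t
      obtain ⟨t, hit, htn, hle⟩ := hN i n hnN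
      have hge := hab t (le_of_lt hit) (le_of_lt htn)
      have Et : (g (i+n) - g i) * ((t:ℤ) - i) = (g t - g i) * (n:ℤ) := le_antisymm hge hle
      have hnpos : (0:ℤ) < n := by exact_mod_cast lt_of_lt_of_le hN1 hnN
      have htipos : (0:ℤ) < (t:ℤ) - i := by
        have : (i:ℤ) < t := by exact_mod_cast hit
        linarith
      rcases le_or_gt k t with hkt | htk
      · -- left piece [i, t]
        set n' : ℕ := t - i with hn'
        have hin' : i + n' = t := by omega
        have hn'c : ((n' : ℤ)) = (t:ℤ) - i := by
          rw [hn']; push_cast [Nat.cast_sub (le_of_lt hit)]; ring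
        have hab' : Supp g i n' := by
          intro m hm1 hm2
          rw [hin', hn'c]
          rw [hin'] at hm2
          have Hm := hab m hm1 (le_trans hm2 (le_of_lt htn))
          have H1 : (g (i+n) - g i) * ((m:ℤ) - i) * ((t:ℤ) - i)
              ≤ (g m - g i) * (n:ℤ) * ((t:ℤ) - i) :=
            mul_le_mul_of_nonneg_right Hm (le_of_lt htipos)
          have H2 : (g (i+n) - g i) * ((m:ℤ) - i) * ((t:ℤ) - i)
              = (g t - g i) * (n:ℤ) * ((m:ℤ) - i) := by
            linear_combination ((m:ℤ) - i) * Et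
          have key : (g t - g i) * ((m:ℤ) - i) * (n:ℤ) ≤ (g m - g i) * ((t:ℤ) - i) * (n:ℤ) := by
            linarith [H1, H2]
          exact le_of_mul_le_mul_right key hnpos
        have hn'lt : n' < n := by omega
        have IH' := IH n' hn'lt i k hik (by omega) hab'
        rw [hin', hn'c] at IH'
        have key : (g k - g i) * (n:ℤ) * ((t:ℤ) - i)
            ≤ ((g (i+n) - g i) * ((k:ℤ) - i) + N * n) * ((t:ℤ) - i) := by
          have H1 : (g k - g i) * ((t:ℤ) - i) * (n:ℤ)
              ≤ ((g t - g i) * ((k:ℤ) - i) + N * ((t:ℤ) - i)) * (n:ℤ) :=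
            mul_le_mul_of_nonneg_right IH' (le_of_lt hnpos)
          have H2 : (g t - g i) * ((k:ℤ) - i) * (n:ℤ)
              = (g (i+n) - g i) * ((t:ℤ) - i) * ((k:ℤ) - i) := by
            linear_combination (-((k:ℤ) - i)) * Et
          linarith [H1, H2]
        exact le_of_mul_le_mul_right key htipos
      · -- right piece [t, i+n]
        set n'' : ℕ := (i + n) - t with hn''
        have htn'' : t + n'' = i + n := by omega
        have hn''c : ((n'' : ℤ)) = ((i:ℤ) + n) - t := by
          rw [hn'']; push_cast [Nat.cast_sub (le_of_lt htn)]; ring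
        have hjt : (0:ℤ) < ((i:ℤ) + n) - t := by
          have : (t:ℤ) < (i:ℤ) + n := by exact_mod_cast htn
          linarith
        have E0 : (g (i+n) - g t) * (n:ℤ) = (g (i+n) - g i) * (((i:ℤ) + n) - t) := by
          linear_combination Et
        have hab'' : Supp g t n'' := by
          intro m hm1 hm2
          rw [htn''] at hm2 ⊢
          rw [hn''c]
          have Hm := hab m (le_trans (le_of_lt hit) hm1) hm2
          have H0 : (g (i+n) - g i) * ((m:ℤ) - t) ≤ (g m - g t) * (n:ℤ) := by
            linarith [Hm, Et]
          have H1 : (g (i+n) - g i) * ((m:ℤ) - t) * (((i:ℤ) + n) - t)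
              ≤ (g m - g t) * (n:ℤ) * (((i:ℤ) + n) - t) :=
            mul_le_mul_of_nonneg_right H0 (le_of_lt hjt)
          have H2 : (g (i+n) - g t) * (n:ℤ) * ((m:ℤ) - t)
              = (g (i+n) - g i) * (((i:ℤ) + n) - t) * ((m:ℤ) - t) := by
            linear_combination ((m:ℤ) - t) * E0
          have key : (g (i+n) - g t) * ((m:ℤ) - t) * (n:ℤ)
              ≤ (g m - g t) * (((i:ℤ) + n) - t) * (n:ℤ) := by
            linarith [H1, H2]
          exact le_of_mul_le_mul_right key hnpos
        have hn''lt : n'' < n := by omega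
        have IH' := IH n'' hn''lt t k (le_of_lt htk) (by omega) hab''
        rw [htn''] at IH'
        rw [hn''c] at IH'
        have key : (g k - g i) * (n:ℤ) * (((i:ℤ) + n) - t)
            ≤ ((g (i+n) - g i) * ((k:ℤ) - i) + N * n) * (((i:ℤ) + n) - t) := by
          have H1 : (g k - g t) * (((i:ℤ)+n) - t) * (n:ℤ)
              ≤ ((g (i+n) - g t) * ((k:ℤ) - t) + N * (((i:ℤ)+n) - t)) * (n:ℤ) :=
            mul_le_mul_of_nonneg_right IH' (le_of_lt hnpos)
          have E1 : (g (i+n) - g t) * ((k:ℤ) - t) * (n:ℤ)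
              = (g (i+n) - g i) * (((i:ℤ) + n) - t) * ((k:ℤ) - t) := by
            linear_combination ((k:ℤ) - t) * E0
          have E2 : (g t - g i) * (n:ℤ) * (((i:ℤ) + n) - t)
              = (g (i+n) - g i) * ((t:ℤ) - i) * (((i:ℤ) + n) - t) := by
            linear_combination (-(((i:ℤ) + n) - t)) * Et
          linarith [H1, E1, E2]
        exact le_of_mul_le_mul_right key hjt


include hN1 hmono hlip hN in
/-- Lemma H : the path always stays within `N` above any of its chords. -/
theorem lemH : ∀ (n i k : ℕ), i ≤ k → k ≤ i + n →
    (g k - g i) * (n:ℤ) ≤ (g (i+n) - g i) * ((k:ℤ) - (i:ℤ)) + N * n := by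
  intro n
  induction n using Nat.strong_induction_on with
  | _ n IH =>
    intro i k hik hki
    rcases Nat.eq_zero_or_pos n with hn0 | hn0
    · subst hn0
      have : k = i := by omega
      subst this
      simp
    obtain ⟨t, hit, htn, hmin⟩ := exists_slope_min g i n hn0
    have htipos : (0:ℤ) < (t:ℤ) - i := by
      have : (i:ℤ) < t := by exact_mod_cast hit
      linarith
    have hnn : (0:ℤ) ≤ (n:ℤ) := by positivity
    have hnnn : ((i + n : ℕ) : ℤ) - (i:ℤ) = (n:ℤ) := by push_cast; ring
    have Bt : (g t - g i) * (n:ℤ) ≤ (g (i+n) - g i) * ((t:ℤ) - i) := by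
      have := hmin (i+n) (by omega) le_rfl
      rwa [hnnn] at this
    rcases le_or_gt k t with hkt | htk
    · -- use lemF on [i, t]
      set n' : ℕ := t - i with hn'
      have hin' : i + n' = t := by omega
      have hn'c : ((n' : ℤ)) = (t:ℤ) - i := by
        rw [hn']; push_cast [Nat.cast_sub (le_of_lt hit)]; ring
      have hab' : Supp g i n' := by
        intro m hm1 hm2
        rw [hin', hn'c]
        rw [hin'] at hm2
        rcases Nat.eq_or_lt_of_le hm1 with hmi | hmi
        · rw [← hmi]; simp
        · exact hmin m hmi (le_trans hm2 htn)
      have F := lemF g N hN1 hmono hlip hN n' i k hik (by omega) hab'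
      rw [hin', hn'c] at F
      have hki' : (0:ℤ) ≤ (k:ℤ) - i := by
        have : (i:ℤ) ≤ k := by exact_mod_cast hik
        linarith
      have key : (g k - g i) * (n:ℤ) * ((t:ℤ) - i)
          ≤ ((g (i+n) - g i) * ((k:ℤ) - i) + N * n) * ((t:ℤ) - i) := by
        have H1 := mul_le_mul_of_nonneg_right F hnn
        have H2 := mul_le_mul_of_nonneg_right Bt hki'
        linarith [H1, H2]
      exact le_of_mul_le_mul_right key htipos
    · -- recurse on [t, i+n]
      have htn2 : t < i + n := lt_of_lt_of_le htk hki
      set n'' : ℕ := (i + n) - t with hn''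
      have htn'' : t + n'' = i + n := by omega
      have hn''c : ((n'' : ℤ)) = ((i:ℤ) + n) - t := by
        rw [hn'']; push_cast [Nat.cast_sub (le_of_lt htn2)]; ring
      have hjt : (0:ℤ) < ((i:ℤ) + n) - t := by
        have : (t:ℤ) < (i:ℤ) + n := by exact_mod_cast htn2
        linarith
      have hjk : (0:ℤ) ≤ ((i:ℤ) + n) - k := by
        have : (k:ℤ) ≤ (i:ℤ) + n := by exact_mod_cast hki
        linarith
      have IH' := IH n'' (by omega) t k (le_of_lt htk) (by omega)
      rw [htn'', hn''c] at IH'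
      have key : (g k - g i) * (n:ℤ) * (((i:ℤ) + n) - t)
          ≤ ((g (i+n) - g i) * ((k:ℤ) - i) + N * n) * (((i:ℤ) + n) - t) := by
        have HA := mul_le_mul_of_nonneg_right IH' hnn
        have HB := mul_le_mul_of_nonneg_right Bt hjk
        linarith [HA, HB]
      exact le_of_mul_le_mul_right key hjt

include hN1 hmono hlip hN in
/-- Lemma G : a long supported chord has slope with small denominator. -/
theorem lemG : ∀ i n, N ≤ n → Supp g i n →
    ∃ t, i < t ∧ t ≤ i + n ∧ t - i < N ∧
      (g (i+n) - g i) * ((t:ℤ) - (i:ℤ)) = (g t - g i) * (n:ℤ) := by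
  intro i n hNn hab
  have hnpos : (0:ℤ) < (n:ℤ) := by exact_mod_cast lt_of_lt_of_le hN1 hNn
  have hex : ∃ t, i < t ∧ t ≤ i + n ∧
      (g (i+n) - g i) * ((t:ℤ) - (i:ℤ)) = (g t - g i) * (n:ℤ) := by
    obtain ⟨k, hik, hkn, hle⟩ := hN i n hNn
    exact ⟨k, hik, le_of_lt hkn,
      le_antisymm (hab k (le_of_lt hik) (le_of_lt hkn)) hle⟩
  classical
  obtain ⟨hit, htn, Et⟩ := Nat.find_spec hex
  set t0 := Nat.find hex with ht0
  refine ⟨t0, hit, htn, ?_, Et⟩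
  by_contra hcon
  push_neg at hcon
  obtain ⟨k', hik', hk't, hk'le⟩ := hN i (t0 - i) hcon
  have hk't2 : k' < t0 := by omega
  have hticast : ((t0 - i : ℕ) : ℤ) = (t0:ℤ) - i := by
    push_cast [Nat.cast_sub (le_of_lt hit)]; ring
  rw [hticast] at hk'le
  have hit0 : i + (t0 - i) = t0 := by omega
  rw [hit0] at hk'le
  -- k' is not on the big chord (minimality of t0), hence strictly above it
  have hk'n : k' < i + n := by omega
  have hstrict : (g (i+n) - g i) * ((k':ℤ) - i) < (g k' - g i) * (n:ℤ) := by
    rcases lt_or_eq_of_le (hab k' (le_of_lt hik') (le_of_lt hk'n)) with h | h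
    · exact h
    · exact absurd ⟨hik', le_of_lt hk'n, h⟩ (Nat.find_min hex hk't2)
  have htipos : (0:ℤ) < (t0:ℤ) - i := by
    have : (i:ℤ) < t0 := by exact_mod_cast hit
    linarith
  -- multiply hstrict by (t0 - i) and use Et
  have H1 : (g (i+n) - g i) * ((k':ℤ) - i) * ((t0:ℤ) - i)
      < (g k' - g i) * (n:ℤ) * ((t0:ℤ) - i) :=
    mul_lt_mul_of_pos_right hstrict htipos
  have H2 : (g (i+n) - g i) * ((k':ℤ) - i) * ((t0:ℤ) - i)
      = (g t0 - g i) * (n:ℤ) * ((k':ℤ) - i) := by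
    linear_combination ((k':ℤ) - i) * Et
  have key : (g t0 - g i) * ((k':ℤ) - i) * (n:ℤ) < (g k' - g i) * ((t0:ℤ) - i) * (n:ℤ) := by
    linarith [H1, H2]
  have := lt_of_mul_lt_mul_right key (le_of_lt hnpos)
  linarith [hk'le, this]

end


def S (w : ℕ → Bool) (n : ℕ) : ℕ := ((List.range n).map w).count true

lemma factor_length (w : ℕ → Bool) (i n : ℕ) : (factor w i n).length = n := by
  simp [factor]

lemma S_add (w : ℕ → Bool) (i n : ℕ) :
    S w (i + n) = S w i + (factor w i n).count true := by
  simp only [S, factor, List.range_add, List.map_append, List.count_append, List.map_map]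
  rfl

lemma count_le (w : ℕ → Bool) (i n : ℕ) : (factor w i n).count true ≤ n := by
  have := List.count_le_length (l := factor w i n) (a := true)
  rwa [factor_length] at this

lemma factor_take (w : ℕ → Bool) (i n k : ℕ) (hk : k ≤ n) :
    (factor w i n).take k = factor w i k := by
  simp [factor, ← List.map_take, List.take_range, Nat.min_eq_left hk]


def A (w : ℕ → Bool) : ℕ → ℤ := fun n => (S w n : ℤ)

lemma A_mono (w : ℕ → Bool) : ∀ i j : ℕ, i ≤ j → A w i ≤ A w j := by
  intro i j hij
  obtain ⟨n, rfl⟩ := Nat.exists_eq_add_of_le hij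
  have := S_add w i n
  simp only [A]
  omega

lemma A_lip (w : ℕ → Bool) : ∀ i j : ℕ, i ≤ j → A w j - A w i ≤ (j:ℤ) - (i:ℤ) := by
  intro i j hij
  obtain ⟨n, rfl⟩ := Nat.exists_eq_add_of_le hij
  have h1 := S_add w i n
  have h2 := count_le w i n
  simp only [A]
  push_cast
  omega

/-- key combinatorial step : if the path is strictly above (or strictly below) the
chord on the whole interior of `[i, i+n]`, then `factor w i n` is weakly abelian
unbordered. -/
lemma strict_not_bordered (w : ℕ → Bool) (i n : ℕ)
    (hstrict : (∀ k, i < k → k < i + n →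
        (A w (i+n) - A w i) * ((k:ℤ) - (i:ℤ)) < (A w k - A w i) * (n:ℤ)) ∨
      (∀ k, i < k → k < i + n →
        (A w k - A w i) * (n:ℤ) < (A w (i+n) - A w i) * ((k:ℤ) - (i:ℤ)))) :
    ¬ WeaklyAbelianBordered (factor w i n) := by
  rintro ⟨p, s, hp, hs, hpne, hplen, hsne, hslen, hfreq⟩
  set u := factor w i n with hu
  have ulen : u.length = n := factor_length w i n
  set k := p.length with hk
  set l := s.length with hl
  have hk1 : 1 ≤ k := List.length_pos_iff.2 hpne
  have hkn : k < n := by rw [← ulen]; exact hplen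
  have hl1 : 1 ≤ l := List.length_pos_iff.2 hsne
  have hln : l < n := by rw [← ulen]; exact hslen
  -- prefix count
  have hptake : p = u.take k := (List.prefix_iff_eq_take.1 hp)
  have hpfac : p = factor w i k := by rw [hptake, hu, factor_take w i n k hkn.le]
  have hcp : S w (i + k) = S w i + p.count true := by rw [hpfac] at *; exact S_add w i k
  -- suffix count
  have hsdrop : s = u.drop (n - l) := by
    have := List.suffix_iff_eq_drop.1 hs
    rwa [ulen, ← hl] at this
  have htake : u.take (n - l) = factor w i (n - l) := by
    rw [hu]; exact factor_take w i n (n - l) (by omega)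
  have hsplit : u.count true = (u.take (n-l)).count true + s.count true := by
    conv_lhs => rw [← List.take_append_drop (n - l) u]
    rw [List.count_append, ← hsdrop]
  have hcu : S w (i + n) = S w i + u.count true := S_add w i n
  have hct : S w (i + (n - l)) = S w i + (u.take (n-l)).count true := by
    rw [htake]; exact S_add w i (n - l)
  -- frequencies
  have hfq := hfreq true
  have hcpl : (p.count true : ℤ) * l = (s.count true : ℤ) * k := by
    rw [← hk, ← hl] at hfq
    have hk0 : ((k:ℚ)) ≠ 0 := by positivity
    have hl0 : ((l:ℚ)) ≠ 0 := by positivity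
    rw [div_eq_div_iff hk0 hl0] at hfq
    exact_mod_cast hfq
  set cp := (p.count true : ℤ)
  set cs := (s.count true : ℤ)
  set c := (u.count true : ℤ)
  have hAk : A w (i + k) - A w i = cp := by simp only [A]; push_cast; omega
  have hAn : A w (i + n) - A w i = c := by simp only [A]; push_cast; omega
  have hAnl : A w (i + (n - l)) - A w i = c - cs := by simp only [A]; push_cast; omega
  have hkc : ((i + k : ℕ) : ℤ) - (i : ℤ) = (k : ℤ) := by push_cast; ring
  have hnlc : ((i + (n - l) : ℕ) : ℤ) - (i : ℤ) = (n : ℤ) - (l : ℤ) := by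
    push_cast [Nat.cast_sub hln.le]; ring
  have hkpos : (0:ℤ) < k := by exact_mod_cast hk1
  have hlpos : (0:ℤ) < l := by exact_mod_cast hl1
  rcases hstrict with habove | hbelow
  · have h1 := habove (i + k) (by omega) (by omega)
    have h2 := habove (i + (n - l)) (by omega) (by omega)
    rw [hAk, hAn, hkc] at h1
    rw [hAnl, hAn, hnlc] at h2
    -- h1 : c * k < cp * n ; h2 : c * (n - l) < (c - cs) * n  i.e. cs * n < c * l
    have h3 : cs * n < c * l := by linarith
    have H1 := mul_lt_mul_of_pos_right h1 hlpos
    have H2 := mul_lt_mul_of_pos_right h3 hkpos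
    have e : cp * n * l = cs * n * k := by linear_combination (n:ℤ) * hcpl
    linarith
  · have h1 := hbelow (i + k) (by omega) (by omega)
    have h2 := hbelow (i + (n - l)) (by omega) (by omega)
    rw [hAk, hAn, hkc] at h1
    rw [hAnl, hAn, hnlc] at h2
    have h3 : c * l < cs * n := by linarith
    have H1 := mul_lt_mul_of_pos_right h1 hlpos
    have H2 := mul_lt_mul_of_pos_right h3 hkpos
    have e : cp * n * l = cs * n * k := by linear_combination (n:ℤ) * hcpl
    linarith


lemma S_facts (w : ℕ → Bool) {i j : ℕ} (hij : i ≤ j) :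
    S w i ≤ S w j ∧ S w j ≤ S w i + (j - i) := by
  have h1 := S_add w i (j - i)
  have h2 := count_le w i (j - i)
  have h3 : i + (j - i) = j := by omega
  rw [h3] at h1
  omega

lemma count_split (l : List Bool) : l.length = l.count true + l.count false := by
  have := List.length_eq_countP_add_countP (l := l) (p := (· == true))
  simp only [List.count]
  rw [this]
  congr 1
  apply List.countP_congr
  intro a _
  cases a <;> simp

end WAUaux

open WAUaux in
set_option maxHeartbeats 2000000 in
/-- If an infinite binary word has only finitely many weakly abelian unbordered factors,
then each letter has a frequency in `w`, and it is rational. -/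
theorem stmt_6 (w : ℕ → Bool)
    (h : {u : List Bool | IsFactor u w ∧ ¬ WeaklyAbelianBordered u}.Finite) :
    ∀ a : Bool, ∃ r : ℚ,
      Tendsto (fun n => ((factor w 0 n).count a : ℝ) / n) atTop (nhds (r : ℝ)) := by
  classical
  -- a bound on the lengths of weakly abelian unbordered factors
  obtain ⟨M, hM0⟩ := (h.image List.length).bddAbove
  have hM : ∀ u : List Bool, IsFactor u w → ¬ WeaklyAbelianBordered u → u.length ≤ M :=
    fun u h1 h2 => hM0 (Set.mem_image_of_mem _ ⟨h1, h2⟩)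
  set N : ℕ := M + 2 with hNdef
  have hN1 : 0 < N := by omega
  -- no long factor is strictly above all its chords…
  have hNa : ∀ i n : ℕ, N ≤ n → ∃ k, i < k ∧ k < i + n ∧
      (A w k - A w i) * (n:ℤ) ≤ (A w (i+n) - A w i) * ((k:ℤ) - (i:ℤ)) := by
    intro i n hn
    by_contra hcon
    push_neg at hcon
    have hwau := strict_not_bordered w i n (Or.inl (fun k hk1 hk2 => hcon k hk1 hk2))
    have := hM _ ⟨i, by rw [factor_length]⟩ hwau
    rw [factor_length] at this
    omega
  -- …nor strictly below
  have hNb : ∀ i n : ℕ, N ≤ n → ∃ k, i < k ∧ k < i + n ∧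
      (A w (i+n) - A w i) * ((k:ℤ) - (i:ℤ)) ≤ (A w k - A w i) * (n:ℤ) := by
    intro i n hn
    by_contra hcon
    push_neg at hcon
    have hwau := strict_not_bordered w i n (Or.inr (fun k hk1 hk2 => hcon k hk1 hk2))
    have := hM _ ⟨i, by rw [factor_length]⟩ hwau
    rw [factor_length] at this
    omega
  -- the complemented path
  set g' : ℕ → ℤ := fun n => (n:ℤ) - A w n with hg'
  have hmono' : ∀ i j : ℕ, i ≤ j → g' i ≤ g' j := by
    intro i j hij
    have := A_lip w i j hij
    simp only [hg']
    linarith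
  have hlip' : ∀ i j : ℕ, i ≤ j → g' j - g' i ≤ (j:ℤ) - (i:ℤ) := by
    intro i j hij
    have := A_mono w i j hij
    simp only [hg']
    linarith
  have hN' : ∀ i n : ℕ, N ≤ n → ∃ k, i < k ∧ k < i + n ∧
      (g' k - g' i) * (n:ℤ) ≤ (g' (i+n) - g' i) * ((k:ℤ) - (i:ℤ)) := by
    intro i n hn
    obtain ⟨k, hk1, hk2, hk3⟩ := hNb i n hn
    refine ⟨k, hk1, hk2, ?_⟩
    simp only [hg']
    push_cast
    linarith [hk3]
  have Hup := lemH (A w) N hN1 (A_mono w) (A_lip w) hNa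
  have Hdn := lemH g' N hN1 hmono' hlip' hN'
  have hA0 : A w 0 = 0 := by simp [A, S]
  -- two-sided chord bound from the origin
  have Hbound : ∀ k n : ℕ, k ≤ n → |(S w k : ℤ) * n - (S w n : ℤ) * k| ≤ N * n := by
    intro k n hkn
    have h1 := Hup n 0 k (Nat.zero_le k) (by omega)
    have h2 := Hdn n 0 k (Nat.zero_le k) (by omega)
    simp only [Nat.zero_add, hA0, hg', Nat.cast_zero, sub_zero] at h1 h2
    simp only [A] at h1 h2
    rw [abs_le]
    constructor <;> nlinarith [h1, h2]
  set aseq : ℕ → ℝ := fun n => (S w n : ℝ) / n with ha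
  have hdiff : ∀ k n : ℕ, 1 ≤ k → k ≤ n → |aseq k - aseq n| ≤ N / k := by
    intro k n hk1 hkn
    have hb := Hbound k n hkn
    have hkpos : (0:ℝ) < k := by exact_mod_cast hk1
    have hnpos : (0:ℝ) < n := by
      have : (k:ℝ) ≤ n := by exact_mod_cast hkn
      linarith
    have hbr : |(S w k : ℝ) * n - (S w n : ℝ) * k| ≤ N * n := by exact_mod_cast hb
    have heq : aseq k - aseq n = ((S w k : ℝ) * n - (S w n : ℝ) * k) / (k * n) := by
      simp only [ha]
      field_simp
    rw [heq, abs_div, abs_of_pos (mul_pos hkpos hnpos)]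
    rw [div_le_div_iff₀ (mul_pos hkpos hnpos) hkpos]
    nlinarith [mul_le_mul_of_nonneg_right hbr hkpos.le]
  have hcauchy : CauchySeq aseq := by
    rw [Metric.cauchySeq_iff']
    intro ε hε
    refine ⟨⌊(N:ℝ)/ε⌋₊ + 1, fun n hn => ?_⟩
    set K : ℕ := ⌊(N:ℝ)/ε⌋₊ + 1 with hK
    have hK1 : 1 ≤ K := by omega
    have hd := hdiff K n hK1 hn
    rw [Real.dist_eq, abs_sub_comm]
    refine lt_of_le_of_lt hd ?_
    have hKr : (N:ℝ)/ε < K := by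
      have := Nat.lt_floor_add_one ((N:ℝ)/ε)
      rw [hK]
      push_cast
      push_cast at this
      linarith
    have hKpos : (0:ℝ) < K := by positivity
    rw [div_lt_iff₀ hKpos]
    have := (div_lt_iff₀ hε).1 hKr
    linarith
  obtain ⟨α, hα⟩ := cauchySeq_tendsto_of_complete hcauchy
  have Habs : ∀ k : ℕ, 1 ≤ k → |(S w k : ℝ) - α * k| ≤ N := by
    intro k hk1
    have hkpos : (0:ℝ) < k := by exact_mod_cast hk1
    have hlim : Tendsto (fun n => |aseq k - aseq n|) atTop (nhds |aseq k - α|) :=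
      (tendsto_const_nhds.sub hα).abs
    have hle : |aseq k - α| ≤ N / k := le_of_tendsto hlim (by
      filter_upwards [eventually_ge_atTop k] with n hn using hdiff k n hk1 hn)
    have heq : |(S w k : ℝ) - α * k| = |aseq k - α| * k := by
      rw [← abs_of_pos hkpos, ← abs_mul, abs_of_pos hkpos]
      congr 1
      simp only [ha]
      field_simp
    rw [heq]
    calc |aseq k - α| * k ≤ (N/k) * k := by nlinarith
      _ = N := by field_simp
  -- the limit is rational
  have hrat : ∃ r : ℚ, (r:ℝ) = α := by
    by_contra hirr
    push_neg at hirr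
    set Qset : Finset ℝ := (Finset.range N ×ˢ Finset.range N).image
        (fun pq => (pq.1 : ℝ) / (pq.2 : ℝ)) with hQs
    have hQmem : ∀ x ∈ Qset, ∃ r : ℚ, (r:ℝ) = x := by
      intro x hx
      simp only [hQs, Finset.mem_image] at hx
      obtain ⟨⟨p,q⟩, _, rfl⟩ := hx
      exact ⟨(p:ℚ)/(q:ℚ), by push_cast; ring⟩
    have hQne : Qset.Nonempty := by
      refine ⟨(0:ℝ)/(0:ℝ), Finset.mem_image.2 ⟨((0:ℕ),(0:ℕ)), ?_, by norm_num⟩⟩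
      exact Finset.mem_product.2 ⟨Finset.mem_range.2 hN1, Finset.mem_range.2 hN1⟩
    have hΔne : (Qset.image (fun x => |x - α|)).Nonempty := hQne.image _
    set δ : ℝ := (Qset.image (fun x => |x - α|)).min' hΔne with hδdef
    have hδpos : 0 < δ := by
      obtain ⟨x, hxQ, hxe⟩ :=
        Finset.mem_image.1 ((Qset.image (fun x => |x - α|)).min'_mem hΔne)
      rw [hδdef, ← hxe]
      obtain ⟨r, hr⟩ := hQmem x hxQ
      have hne : x ≠ α := by rw [← hr]; exact fun hc => hirr r hc
      exact abs_pos.2 (sub_ne_zero.2 hne)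
    have hδle : ∀ x ∈ Qset, δ ≤ |x - α| := fun x hx =>
      (Qset.image (fun x => |x - α|)).min'_le _ (Finset.mem_image_of_mem _ hx)
    set f : ℕ → ℝ := fun n => (S w n : ℝ) - α * n with hf
    have hfabs : ∀ n : ℕ, |f n| ≤ N := by
      intro n
      rcases Nat.eq_zero_or_pos n with rfl | hn
      · have h0 : S w 0 = 0 := by simp [S]
        simp only [hf, h0, Nat.cast_zero, mul_zero, sub_zero, abs_zero]
        positivity
      · exact Habs n hn
    have hbd1 : Filter.IsBoundedUnder (· ≤ ·) atTop f :=
      ⟨N, Filter.eventually_map.2 (Filter.Eventually.of_forall (fun n => (abs_le.1 (hfabs n)).2))⟩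
    have hbd2 : Filter.IsBoundedUnder (· ≥ ·) atTop f :=
      ⟨-N, Filter.eventually_map.2 (Filter.Eventually.of_forall (fun n => (abs_le.1 (hfabs n)).1))⟩
    set d : ℝ := liminf f atTop with hd
    have hev : ∀ᶠ n in atTop, d - δ/4 < f n :=
      eventually_lt_of_lt_liminf (by linarith) hbd2
    have hfr : ∃ᶠ n in atTop, f n < d + δ/4 :=
      frequently_lt_of_liminf_lt hbd1.isCoboundedUnder_ge (by linarith)
    obtain ⟨R0, hR0⟩ := Filter.eventually_atTop.1 hev
    obtain ⟨R, hRlow, hRge⟩ := (hfr.and_eventually (eventually_ge_atTop R0)).exists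
    obtain ⟨m, hmlow, hmge⟩ := (hfr.and_eventually (eventually_ge_atTop (R+1))).exists
    have hmR : R < m := by omega
    obtain ⟨t1, ht1R, ht1m, hmin⟩ := exists_slope_min (A w) R (m - R) (by omega)
    have hRm' : R + (m - R) = m := by omega
    rw [hRm'] at ht1m hmin
    have ht1Rpos : (0:ℝ) < (t1:ℝ) - R := by
      have : (R:ℝ) < t1 := by exact_mod_cast ht1R
      linarith
    have ht1Rge1 : (1:ℝ) ≤ (t1:ℝ) - R := by
      have : (R:ℝ) + 1 ≤ t1 := by exact_mod_cast ht1R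
      linarith
    set σ : ℝ := ((S w t1 : ℝ) - S w R) / ((t1:ℝ) - R) with hσ
    have hSf : ∀ x : ℕ, (S w x : ℝ) = f x + α * x := by
      intro x
      simp only [hf]
      ring
    have hfR : d - δ/4 < f R := hR0 R hRge
    have hft1 : d - δ/4 < f t1 := hR0 t1 (by omega)
    -- upper bound on σ
    have hup : σ ≤ α + δ/2 := by
      have hmm := hmin m hmR le_rfl
      have hmr : ((S w t1 : ℝ) - S w R) * ((m:ℝ) - R) ≤ ((S w m : ℝ) - S w R) * ((t1:ℝ) - R) := by
        have : (A w t1 - A w R) * ((m:ℤ) - R) ≤ (A w m - A w R) * ((t1:ℤ) - R) := hmm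
        simp only [A] at this
        exact_mod_cast this
      have hmRpos : (0:ℝ) < (m:ℝ) - R := by
        have : (R:ℝ) < m := by exact_mod_cast hmR
        linarith
      have hmRge1 : (1:ℝ) ≤ (m:ℝ) - R := by
        have : (R:ℝ) + 1 ≤ m := by exact_mod_cast hmR
        linarith
      have h1 : σ ≤ ((S w m:ℝ) - S w R)/((m:ℝ) - R) := by
        rw [hσ, div_le_div_iff₀ ht1Rpos hmRpos]
        linarith [hmr]
      have h2 : ((S w m:ℝ) - S w R)/((m:ℝ) - R) = α + (f m - f R)/((m:ℝ)-R) := by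
        rw [hSf m, hSf R]
        field_simp
        ring
      have hnum : f m - f R < δ/2 := by linarith
      have h3 : (f m - f R)/((m:ℝ)-R) ≤ δ/2 := by
        rcases le_or_gt (f m - f R) 0 with hc | hc
        · have : (f m - f R)/((m:ℝ)-R) ≤ 0 := div_nonpos_of_nonpos_of_nonneg hc hmRpos.le
          linarith
        · have := div_le_self hc.le hmRge1
          linarith
      linarith
    -- lower bound on σ
    have hdown : α - δ/2 ≤ σ := by
      have h2 : σ = α + (f t1 - f R)/((t1:ℝ)-R) := by
        rw [hσ, hSf t1, hSf R]
        field_simp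
        ring
      have hnum : -(δ/2) ≤ f t1 - f R := by linarith
      have h3 : -(δ/2) ≤ (f t1 - f R)/((t1:ℝ)-R) := by
        rcases le_or_gt 0 (f t1 - f R) with hc | hc
        · have : 0 ≤ (f t1 - f R)/((t1:ℝ)-R) := div_nonneg hc ht1Rpos.le
          linarith
        · have : (f t1 - f R) ≤ (f t1 - f R)/((t1:ℝ)-R) := by
            rw [le_div_iff₀ ht1Rpos]
            nlinarith
          linarith
      linarith
    -- σ lies in the finite set Qset
    have hσQ : σ ∈ Qset := by
      have hkey : ∃ p q : ℕ, p < N ∧ q < N ∧ 0 < q ∧ σ = (p:ℝ)/(q:ℝ) := by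
        rcases lt_or_ge (t1 - R) N with hsh | hlg
        · -- short chord : its own slope has small denominator
          obtain ⟨hm1, hm2⟩ := S_facts w (le_of_lt ht1R)
          refine ⟨S w t1 - S w R, t1 - R, by omega, hsh, by omega, ?_⟩
          rw [hσ]
          have e1 : ((S w t1 - S w R : ℕ) : ℝ) = (S w t1 : ℝ) - S w R := by
            push_cast [Nat.cast_sub hm1]
            ring
          have e2 : ((t1 - R : ℕ) : ℝ) = (t1:ℝ) - R := by
            push_cast [Nat.cast_sub (le_of_lt ht1R)]
            ring
          rw [e1, e2]
        · -- long chord : use Lemma G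
          have hLc : ((t1 - R : ℕ) : ℤ) = (t1:ℤ) - R := by
            push_cast [Nat.cast_sub (le_of_lt ht1R)]
            ring
          have hRL : R + (t1 - R) = t1 := by omega
          have hsupp : Supp (A w) R (t1 - R) := by
            intro m' hm'1 hm'2
            rw [hRL] at hm'2 ⊢
            rw [hLc]
            rcases Nat.eq_or_lt_of_le hm'1 with hm' | hm'
            · rw [← hm']
              simp
            · exact hmin m' hm' (le_trans hm'2 ht1m)
          obtain ⟨t, htR, htt1, htRN, hEt⟩ :=
            lemG (A w) N hN1 (A_mono w) (A_lip w) hNa R (t1 - R) hlg hsupp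
          rw [hRL, hLc] at hEt
          obtain ⟨hm1, hm2⟩ := S_facts w (le_of_lt htR)
          refine ⟨S w t - S w R, t - R, by omega, htRN, by omega, ?_⟩
          have htRpos : (0:ℝ) < (t:ℝ) - R := by
            have : (R:ℝ) < t := by exact_mod_cast htR
            linarith
          have hEr : ((S w t1 : ℝ) - S w R) * ((t:ℝ) - R)
              = ((S w t : ℝ) - S w R) * ((t1:ℝ) - R) := by
            simp only [A] at hEt
            exact_mod_cast hEt
          have e1 : ((S w t - S w R : ℕ) : ℝ) = (S w t : ℝ) - S w R := by
            push_cast [Nat.cast_sub hm1]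
            ring
          have e2 : ((t - R : ℕ) : ℝ) = (t:ℝ) - R := by
            push_cast [Nat.cast_sub (le_of_lt htR)]
            ring
          rw [hσ, e1, e2, div_eq_div_iff ht1Rpos.ne' htRpos.ne']
          linarith [hEr]
      obtain ⟨p, q, hp, hq, hq0, hσeq⟩ := hkey
      rw [hσeq]
      exact Finset.mem_image.2 ⟨(p,q),
        Finset.mem_product.2 ⟨Finset.mem_range.2 hp, Finset.mem_range.2 hq⟩, rfl⟩
    have hd1 := hδle σ hσQ
    have hd2 : |σ - α| ≤ δ/2 := abs_le.2 ⟨by linarith, by linarith⟩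
    linarith
  obtain ⟨r, hr⟩ := hrat
  have hScount : ∀ n : ℕ, (factor w 0 n).count true = S w n := by
    intro n
    have h1 := S_add w 0 n
    have h2 : S w 0 = 0 := by simp [S]
    rw [Nat.zero_add] at h1
    omega
  intro a
  cases a with
  | true =>
    refine ⟨r, ?_⟩
    rw [hr]
    exact hα.congr (fun n => by rw [hScount n])
  | false =>
    refine ⟨1 - r, ?_⟩
    have hlim : Tendsto (fun n => 1 - aseq n) atTop (nhds (1 - α)) :=
      tendsto_const_nhds.sub hα
    have hcast : ((1 - r : ℚ):ℝ) = 1 - α := by push_cast [hr]; ring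
    rw [hcast]
    refine Tendsto.congr' ?_ hlim
    filter_upwards [eventually_ge_atTop 1] with n hn
    have hlen : (factor w 0 n).length = n := factor_length w 0 n
    have hcnt := count_split (factor w 0 n)
    rw [hlen, hScount n] at hcnt
    have hSle : S w n ≤ n := by omega
    have hfc : ((factor w 0 n).count false : ℝ) = (n:ℝ) - S w n := by
      have : (factor w 0 n).count false = n - S w n := by omega
      rw [this]
      push_cast [Nat.cast_sub hSle]
      ring
    have hnpos : (0:ℝ) < n := by exact_mod_cast hn
    simp only [ha]
    rw [hfc]
    field_simp
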